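/- (Cubical Sperner with Cubical Labels.) Let n ≥ 1, let T be a triangulation of □^n, and let λ : V(T) → ext(□^n) be a label function such that for every vertex x = (x_1,…,x_n) ∈ V(T) and every 1 ≤ i ≤ n, if x_i ∈ {−1,1} then λ(x)_i = x_i. Then T contains a neutral simplex, i.e. a simplex σ ∈ T such that for every i ∈ {1,…,n} there exist vertices v₁, v₂ of σ with λ(v₁)_i = −1 and λ(v₂)_i = +1. -/

import Mathlib

open scoped Classical

/-- The `n`-dimensional cube `□ⁿ = [−1,1]ⁿ`: the unit ball of the `ℓ∞` norm in `ℝⁿ`. -/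
def cube (n : ℕ) : Set (Fin n → ℝ) := {x | ∀ i, |x i| ≤ 1}

/-- The extreme points of the `n`-dimensional cube: `{−1,1}ⁿ`. -/
def extCube (n : ℕ) : Set (Fin n → ℝ) := {v | ∀ i, v i = 1 ∨ v i = -1}

namespace CubicalSperner


private theorem card_modEq_fixed_aux {α : Type*} [DecidableEq α] :
    ∀ (c : ℕ) (s : Finset α) (f : α → α), s.card = c → (∀ x ∈ s, f x ∈ s) →
    (∀ x ∈ s, f (f x) = x) →
    s.card % 2 = (s.filter fun x => f x = x).card % 2 := by
  intro c
  induction c using Nat.strong_induction_on with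
  | _ c ih =>
    intro s f hc hmaps hinv
    by_cases hex : ∃ x ∈ s, f x ≠ x
    · obtain ⟨x, hx, hfx⟩ := hex
      have hfxs : f x ∈ s := hmaps x hx
      set t := (s.erase x).erase (f x) with ht
      have hcard : t.card = s.card - 2 := by
        rw [ht, Finset.card_erase_of_mem, Finset.card_erase_of_mem hx]
        · omega
        · exact Finset.mem_erase.2 ⟨hfx, hfxs⟩
      have hsub : t ⊆ s := (Finset.erase_subset _ _).trans (Finset.erase_subset _ _)
      have hmapt : ∀ y ∈ t, f y ∈ t := by
        intro y hy
        have hys : y ∈ s := hsub hy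
        have h1 : y ≠ x := fun h => by simp [ht, h, Finset.mem_erase] at hy
        have h2 : y ≠ f x := fun h => by simp [ht, h] at hy
        refine Finset.mem_erase.2 ⟨?_, Finset.mem_erase.2 ⟨?_, hmaps y hys⟩⟩
        · intro h
          have h3 := hinv y hys
          rw [h, hinv x hx] at h3
          exact h1 h3.symm
        · intro h
          have h3 := hinv y hys
          rw [h] at h3
          exact h2 h3.symm
      have hinvt : ∀ y ∈ t, f (f y) = y := fun y hy => hinv y (hsub hy)
      have hpos : 2 ≤ s.card := by
        have hmem : f x ∈ s.erase x := Finset.mem_erase.2 ⟨fun h => hfx h, hfxs⟩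
        have h1 := Finset.card_erase_of_mem hx
        have h2 := Finset.card_pos.2 ⟨f x, hmem⟩
        omega
      have hlt : t.card < c := by omega
      have hrec := ih t.card hlt t f rfl hmapt hinvt
      have hfilter : s.filter (fun y => f y = y) = t.filter (fun y => f y = y) := by
        apply Finset.ext
        intro y
        constructor
        · intro hy
          obtain ⟨hys, hfy⟩ := Finset.mem_filter.1 hy
          refine Finset.mem_filter.2 ⟨Finset.mem_erase.2 ⟨?_, Finset.mem_erase.2 ⟨?_, hys⟩⟩, hfy⟩
          · intro h
            subst h
            exact hfx (hfy.symm.trans (hinv x hx))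
          · intro h
            subst h
            exact hfx hfy
        · intro hy
          obtain ⟨hyt, hfy⟩ := Finset.mem_filter.1 hy
          exact Finset.mem_filter.2 ⟨hsub hyt, hfy⟩
      rw [hfilter]
      omega
    · push_neg at hex
      rw [Finset.filter_true_of_mem hex]

theorem card_modEq_fixed {α : Type*} [DecidableEq α] (s : Finset α) (f : α → α)
    (hmaps : ∀ x ∈ s, f x ∈ s) (hinv : ∀ x ∈ s, f (f x) = x) :
    s.card % 2 = (s.filter fun x => f x = x).card % 2 :=
  card_modEq_fixed_aux s.card s f rfl hmaps hinv



def Vtx {n N : ℕ} (c : (Fin n → Fin N) × Equiv.Perm (Fin n)) (k : ℕ) : Fin n → ℕ :=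
  fun i => (c.1 i : ℕ) + if ((c.2⁻¹ i : Fin n) : ℕ) < k then 1 else 0

variable {n N : ℕ}

/-- The pivot involution on pairs (cell, vertex index) in dimension `n+1`. -/
def piv (p : ((Fin (n+1) → Fin N) × Equiv.Perm (Fin (n+1))) × ℕ) :
    ((Fin (n+1) → Fin N) × Equiv.Perm (Fin (n+1))) × ℕ :=
  if p.2 = 0 then
    if h : (p.1.1 (p.1.2 0) : ℕ) + 1 < N then
      ((Function.update p.1.1 (p.1.2 0) ⟨(p.1.1 (p.1.2 0) : ℕ) + 1, h⟩,
        p.1.2 * finRotate (n+1)), n+1)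
    else p
  else if p.2 = n+1 then
    if h : 0 < (p.1.1 (p.1.2 (Fin.last n)) : ℕ) then
      ((Function.update p.1.1 (p.1.2 (Fin.last n))
          ⟨(p.1.1 (p.1.2 (Fin.last n)) : ℕ) - 1,
            by have := (p.1.1 (p.1.2 (Fin.last n))).isLt; omega⟩,
        p.1.2 * (finRotate (n+1))⁻¹), 0)
    else p
  else if hk : p.2 < n+1 then
    ((p.1.1, p.1.2 * Equiv.swap ⟨p.2 - 1, by omega⟩ ⟨p.2, hk⟩), p.2)
  else p

-- vertices of the swapped cell agree away from k
theorem vtx_swap (c : (Fin (n+1) → Fin N) × Equiv.Perm (Fin (n+1))) (k : ℕ)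
    (h1 : k < n+1) (j : ℕ) (hj : j ≠ k) :
    Vtx (c.1, c.2 * Equiv.swap ⟨k-1, by omega⟩ ⟨k, h1⟩) j = Vtx c j := by
  funext i
  unfold Vtx
  simp only [mul_inv_rev, Equiv.Perm.mul_apply]
  congr 1
  rw [Equiv.swap_inv]
  by_cases hA : c.2⁻¹ i = ⟨k-1, by omega⟩
  · rw [hA, Equiv.swap_apply_left]
    exact if_congr (by simp only [Fin.val_mk]; omega) rfl rfl
  · by_cases hB : c.2⁻¹ i = ⟨k, h1⟩
    · rw [hB, Equiv.swap_apply_right]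
      exact if_congr (by simp only [Fin.val_mk]; omega) rfl rfl
    · rw [Equiv.swap_apply_of_ne_of_ne hA hB]

theorem finRotate_inv_zero : (finRotate (n+1))⁻¹ (0 : Fin (n+1)) = Fin.last n := by
  rw [Equiv.Perm.inv_eq_iff_eq, finRotate_succ_apply]
  simp

theorem finRotate_inv_val (t : Fin (n+1)) (ht : t ≠ 0) :
    (((finRotate (n+1))⁻¹ t : Fin (n+1)) : ℕ) = (t : ℕ) - 1 := by
  set s := (finRotate (n+1))⁻¹ t with hs
  have hst : finRotate (n+1) s = t := by rw [hs]; simp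
  rw [finRotate_succ_apply] at hst
  have hsl : s ≠ Fin.last n := by
    intro h
    rw [h] at hst
    simp at hst
    exact ht hst.symm
  have := Fin.val_add_one_of_lt (Fin.lt_last_iff_ne_last.2 hsl)
  rw [← hst, this]
  omega

-- vertices after upward shift: Vtx c' j = Vtx c (j+1) for j ≤ n
theorem vtx_shift (c : (Fin (n+1) → Fin N) × Equiv.Perm (Fin (n+1)))
    (h : (c.1 (c.2 0) : ℕ) + 1 < N) (j : ℕ) (hj : j ≤ n) :
    Vtx (Function.update c.1 (c.2 0) ⟨(c.1 (c.2 0) : ℕ) + 1, h⟩,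
      c.2 * finRotate (n+1)) j = Vtx c (j+1) := by
  funext i
  unfold Vtx
  simp only [mul_inv_rev, Equiv.Perm.mul_apply]
  by_cases hi : i = c.2 0
  · subst hi
    have h1 : c.2⁻¹ (c.2 0) = 0 := by simp
    rw [h1]
    have h2 : (finRotate (n+1))⁻¹ (0 : Fin (n+1)) = Fin.last n := finRotate_inv_zero
    rw [h2]
    rw [Function.update_self]
    simp only [Fin.val_last, Fin.val_zero, Fin.val_mk]
    rw [if_neg (by omega)]
    simp only [show 0 < j + 1 by omega, if_true, add_zero]
  · have hupd : Function.update c.1 (c.2 0) ⟨(c.1 (c.2 0) : ℕ) + 1, h⟩ i = c.1 i :=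
      Function.update_of_ne hi _ _
    rw [hupd]
    have ht : c.2⁻¹ i ≠ 0 := by
      intro hcon
      apply hi
      have h2 := congrArg c.2 hcon
      simpa using h2
    have hv := finRotate_inv_val (c.2⁻¹ i) ht
    have htpos : 0 < ((c.2⁻¹ i : Fin (n+1)) : ℕ) := by
      rcases Nat.eq_zero_or_pos ((c.2⁻¹ i : Fin (n+1)) : ℕ) with h' | h'
      · exact absurd (Fin.ext h' : c.2⁻¹ i = 0) ht
      · exact h'
    congr 1
    rw [hv]
    exact if_congr (by omega) rfl rfl

theorem vtx_unshift (c : (Fin (n+1) → Fin N) × Equiv.Perm (Fin (n+1)))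
    (h : 0 < (c.1 (c.2 (Fin.last n)) : ℕ)) (j : ℕ) (hj : j ≤ n) :
    Vtx (Function.update c.1 (c.2 (Fin.last n))
        ⟨(c.1 (c.2 (Fin.last n)) : ℕ) - 1, by have := (c.1 (c.2 (Fin.last n))).isLt; omega⟩,
      c.2 * (finRotate (n+1))⁻¹) (j+1) = Vtx c j := by
  funext i
  unfold Vtx
  simp only [mul_inv_rev, Equiv.Perm.mul_apply, inv_inv]
  by_cases hi : i = c.2 (Fin.last n)
  · subst hi
    have h1 : c.2⁻¹ (c.2 (Fin.last n)) = Fin.last n := by simp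
    rw [h1, Function.update_self]
    have h2 : finRotate (n+1) (Fin.last n) = 0 := by
      rw [finRotate_succ_apply, Fin.last_add_one]
    rw [h2]
    simp only [Fin.val_zero, Fin.val_mk, Fin.val_last]
    simp only [show 0 < j + 1 by omega, if_true, show ¬ (n < j) by omega, if_false]
    omega
  · rw [Function.update_of_ne hi]
    have ht : c.2⁻¹ i ≠ Fin.last n := by
      intro hcon
      apply hi
      have h2 := congrArg c.2 hcon
      simpa using h2
    congr 1
    rw [finRotate_succ_apply]
    have hv := Fin.val_add_one_of_lt (Fin.lt_last_iff_ne_last.2 ht)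
    rw [hv]
    exact if_congr (by omega) rfl rfl

theorem piv_zero_pos (c : (Fin (n+1) → Fin N) × Equiv.Perm (Fin (n+1)))
    (h : (c.1 (c.2 0) : ℕ) + 1 < N) :
    piv (c, 0) = ((Function.update c.1 (c.2 0) ⟨(c.1 (c.2 0) : ℕ) + 1, h⟩,
      c.2 * finRotate (n+1)), n+1) := by
  unfold piv
  rw [if_pos rfl, dif_pos h]

theorem piv_zero_neg (c : (Fin (n+1) → Fin N) × Equiv.Perm (Fin (n+1)))
    (h : ¬((c.1 (c.2 0) : ℕ) + 1 < N)) :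
    piv (c, 0) = (c, 0) := by
  unfold piv
  rw [if_pos rfl, dif_neg h]

theorem piv_top_pos (c : (Fin (n+1) → Fin N) × Equiv.Perm (Fin (n+1)))
    (h : 0 < (c.1 (c.2 (Fin.last n)) : ℕ)) :
    piv (c, n+1) = ((Function.update c.1 (c.2 (Fin.last n))
        ⟨(c.1 (c.2 (Fin.last n)) : ℕ) - 1, by have := (c.1 (c.2 (Fin.last n))).isLt; omega⟩,
      c.2 * (finRotate (n+1))⁻¹), 0) := by
  unfold piv
  rw [if_neg (by omega), if_pos rfl, dif_pos h]

theorem piv_top_neg (c : (Fin (n+1) → Fin N) × Equiv.Perm (Fin (n+1)))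
    (h : ¬(0 < (c.1 (c.2 (Fin.last n)) : ℕ))) :
    piv (c, n+1) = (c, n+1) := by
  unfold piv
  rw [if_neg (by omega), if_pos rfl, dif_neg h]

theorem piv_mid (c : (Fin (n+1) → Fin N) × Equiv.Perm (Fin (n+1))) (k : ℕ)
    (h0 : k ≠ 0) (h1 : k < n+1) :
    piv (c, k) = ((c.1, c.2 * Equiv.swap ⟨k-1, by omega⟩ ⟨k, h1⟩), k) := by
  unfold piv
  rw [if_neg h0, if_neg (by omega), dif_pos h1]

theorem piv_invol (p : ((Fin (n+1) → Fin N) × Equiv.Perm (Fin (n+1))) × ℕ)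
    (hk : p.2 ≤ n+1) : piv (piv p) = p := by
  obtain ⟨c, k⟩ := p
  simp only at hk
  rcases eq_or_ne k 0 with rfl | h0
  · by_cases h : (c.1 (c.2 0) : ℕ) + 1 < N
    · rw [piv_zero_pos c h]
      set c' : (Fin (n+1) → Fin N) × Equiv.Perm (Fin (n+1)) :=
        (Function.update c.1 (c.2 0) ⟨(c.1 (c.2 0) : ℕ) + 1, h⟩, c.2 * finRotate (n+1))
        with hc'
      have hi : c'.2 (Fin.last n) = c.2 0 := by
        simp only [hc', Equiv.Perm.mul_apply]
        rw [finRotate_succ_apply, Fin.last_add_one]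
      have hval : c'.1 (c'.2 (Fin.last n)) = ⟨(c.1 (c.2 0) : ℕ) + 1, h⟩ := by
        rw [hi]
        simp [hc']
      have hpos : 0 < (c'.1 (c'.2 (Fin.last n)) : ℕ) := by rw [hval]; simp
      rw [piv_top_pos c' hpos]
      have hA : Function.update c'.1 (c'.2 (Fin.last n))
          ⟨(c'.1 (c'.2 (Fin.last n)) : ℕ) - 1, by have := (c'.1 (c'.2 (Fin.last n))).isLt; omega⟩
          = c.1 := by
        funext x
        by_cases hx : x = c'.2 (Fin.last n)
        · rw [hx, Function.update_self]
          apply Fin.ext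
          show (c'.1 (c'.2 (Fin.last n)) : ℕ) - 1 = (c.1 (c'.2 (Fin.last n)) : ℕ)
          have e1 : (c'.1 (c'.2 (Fin.last n)) : ℕ) = (c.1 (c.2 0) : ℕ) + 1 := by rw [hval]
          have e2 : (c.1 (c'.2 (Fin.last n)) : ℕ) = (c.1 (c.2 0) : ℕ) := by rw [hi]
          omega
        · rw [Function.update_of_ne hx]
          have hx' : x ≠ c.2 0 := by rw [← hi]; exact hx
          show c'.1 x = c.1 x
          simp only [hc']
          rw [Function.update_of_ne hx']
      have hB : c'.2 * (finRotate (n+1))⁻¹ = c.2 := by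
        simp only [hc']
        rw [mul_inv_cancel_right]
      rw [hA, hB]
    · rw [piv_zero_neg c h, piv_zero_neg c h]
  · rcases eq_or_ne k (n+1) with rfl | h1
    · by_cases h : 0 < (c.1 (c.2 (Fin.last n)) : ℕ)
      · rw [piv_top_pos c h]
        set c' : (Fin (n+1) → Fin N) × Equiv.Perm (Fin (n+1)) :=
          (Function.update c.1 (c.2 (Fin.last n))
            ⟨(c.1 (c.2 (Fin.last n)) : ℕ) - 1,
              by have := (c.1 (c.2 (Fin.last n))).isLt; omega⟩,
           c.2 * (finRotate (n+1))⁻¹) with hc'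
        have hi : c'.2 0 = c.2 (Fin.last n) := by
          simp only [hc', Equiv.Perm.mul_apply]
          rw [finRotate_inv_zero]
        have hval : c'.1 (c'.2 0) = ⟨(c.1 (c.2 (Fin.last n)) : ℕ) - 1,
            by have := (c.1 (c.2 (Fin.last n))).isLt; omega⟩ := by
          rw [hi]
          simp [hc']
        have hlt : (c'.1 (c'.2 0) : ℕ) + 1 < N := by
          rw [hval]
          have := (c.1 (c.2 (Fin.last n))).isLt
          simp only [Fin.val_mk]
          omega
        rw [piv_zero_pos c' hlt]
        have hA : Function.update c'.1 (c'.2 0) ⟨(c'.1 (c'.2 0) : ℕ) + 1, hlt⟩ = c.1 := by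
          funext x
          by_cases hx : x = c'.2 0
          · rw [hx, Function.update_self]
            apply Fin.ext
            show (c'.1 (c'.2 0) : ℕ) + 1 = (c.1 (c'.2 0) : ℕ)
            have e1 : (c'.1 (c'.2 0) : ℕ) = (c.1 (c.2 (Fin.last n)) : ℕ) - 1 := by rw [hval]
            have e2 : (c.1 (c'.2 0) : ℕ) = (c.1 (c.2 (Fin.last n)) : ℕ) := by rw [hi]
            omega
          · rw [Function.update_of_ne hx]
            have hx' : x ≠ c.2 (Fin.last n) := by rw [← hi]; exact hx
            show c'.1 x = c.1 x
            simp only [hc']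
            rw [Function.update_of_ne hx']
        have hB : c'.2 * finRotate (n+1) = c.2 := by
          simp only [hc']
          rw [inv_mul_cancel_right]
        rw [hA, hB]
      · rw [piv_top_neg c h, piv_top_neg c h]
    · have hklt : k < n+1 := by omega
      rw [piv_mid c k h0 hklt, piv_mid _ k h0 hklt]
      have hss : c.2 * Equiv.swap ⟨k-1, by omega⟩ ⟨k, hklt⟩ * Equiv.swap ⟨k-1, by omega⟩ ⟨k, hklt⟩
          = c.2 := by
        rw [mul_assoc, Equiv.swap_mul_self, mul_one]
      rw [hss]

theorem vtx_le (c : (Fin n → Fin N) × Equiv.Perm (Fin n)) (k : ℕ) (i : Fin n) :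
    Vtx c k i ≤ N := by
  have := (c.1 i).isLt
  unfold Vtx
  split <;> omega

def IsRainbow (L : (Fin n → ℕ) → ℕ) (c : (Fin n → Fin N) × Equiv.Perm (Fin n)) : Prop :=
  ∀ m ≤ n, ∃ k ≤ n, L (Vtx c k) = m

def IsGood (L : (Fin n → ℕ) → ℕ) (c : (Fin n → Fin N) × Equiv.Perm (Fin n)) (k : ℕ) : Prop :=
  ∀ m < n, ∃ j, j ≤ n ∧ j ≠ k ∧ L (Vtx c j) = m

theorem piv_good (L : (Fin (n+1) → ℕ) → ℕ)
    (p : ((Fin (n+1) → Fin N) × Equiv.Perm (Fin (n+1))) × ℕ) (hk : p.2 ≤ n+1)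
    (hg : IsGood L p.1 p.2) : IsGood L (piv p).1 (piv p).2 := by
  obtain ⟨c, k⟩ := p
  simp only at hk hg ⊢
  rcases eq_or_ne k 0 with rfl | h0
  · by_cases h : (c.1 (c.2 0) : ℕ) + 1 < N
    · rw [piv_zero_pos c h]
      intro m hm
      obtain ⟨j, hj, hj0, hLj⟩ := hg m hm
      refine ⟨j - 1, by omega, by omega, ?_⟩
      rw [vtx_shift c h (j-1) (by omega)]
      have hjj : j - 1 + 1 = j := by omega
      rw [hjj]
      exact hLj
    · rw [piv_zero_neg c h]
      exact hg
  · rcases eq_or_ne k (n+1) with rfl | h1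
    · by_cases h : 0 < (c.1 (c.2 (Fin.last n)) : ℕ)
      · rw [piv_top_pos c h]
        intro m hm
        obtain ⟨j, hj, hjn, hLj⟩ := hg m hm
        refine ⟨j + 1, by omega, by omega, ?_⟩
        rw [vtx_unshift c h j (by omega)]
        exact hLj
      · rw [piv_top_neg c h]
        exact hg
    · have hklt : k < n+1 := by omega
      rw [piv_mid c k h0 hklt]
      intro m hm
      obtain ⟨j, hj, hjk, hLj⟩ := hg m hm
      refine ⟨j, hj, hjk, ?_⟩
      rw [vtx_swap c k hklt j hjk]
      exact hLj

theorem piv_fixed_char (L : (Fin (n+1) → ℕ) → ℕ)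
    (ha : ∀ x (i : Fin (n+1)), (∀ j, x j ≤ N) → x i = 0 → L x ≠ (i : ℕ))
    (hb : ∀ x (i : Fin (n+1)), (∀ j, x j ≤ N) → x i = N → L x ≤ (i : ℕ))
    (p : ((Fin (n+1) → Fin N) × Equiv.Perm (Fin (n+1))) × ℕ) (hk : p.2 ≤ n+1)
    (hg : IsGood L p.1 p.2) (hf : piv p = p) :
    p.2 = 0 ∧ (p.1.1 (p.1.2 0) : ℕ) + 1 = N ∧ p.1.2 0 = Fin.last n := by
  obtain ⟨c, k⟩ := p
  simp only at hk hg ⊢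
  rcases eq_or_ne k 0 with rfl | h0
  · by_cases h : (c.1 (c.2 0) : ℕ) + 1 < N
    · exfalso
      rw [piv_zero_pos c h] at hf
      have h2 := congrArg Prod.snd hf
      simp at h2
    · refine ⟨rfl, by have := (c.1 (c.2 0)).isLt; omega, ?_⟩
      obtain ⟨j, hj, hj0, hLj⟩ := hg n (by omega)
      have hval : Vtx c j (c.2 0) = N := by
        unfold Vtx
        have h1 : c.2⁻¹ (c.2 0) = 0 := by simp
        rw [h1]
        have := (c.1 (c.2 0)).isLt
        simp only [Fin.val_zero]
        simp only [show 0 < j by omega, if_true]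
        omega
      have hle := hb (Vtx c j) (c.2 0) (vtx_le c j) hval
      rw [hLj] at hle
      apply Fin.ext
      have := (c.2 0).isLt
      simp only [Fin.val_last]
      omega
  · exfalso
    rcases eq_or_ne k (n+1) with rfl | h1
    · by_cases h : 0 < (c.1 (c.2 (Fin.last n)) : ℕ)
      · rw [piv_top_pos c h] at hf
        have h2 := congrArg Prod.snd hf
        simp at h2
      · obtain ⟨j, hj, hjn, hLj⟩ := hg (c.2 (Fin.last n) : ℕ) (c.2 (Fin.last n)).isLt
        have hval : Vtx c j (c.2 (Fin.last n)) = 0 := by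
          unfold Vtx
          have h1 : c.2⁻¹ (c.2 (Fin.last n)) = Fin.last n := by simp
          rw [h1]
          simp only [Fin.val_last]
          rw [if_neg (by omega)]
          omega
        exact ha (Vtx c j) (c.2 (Fin.last n)) (vtx_le c j) hval hLj
    · have hklt : k < n+1 := by omega
      rw [piv_mid c k h0 hklt] at hf
      have hπ : c.2 * Equiv.swap ⟨k-1, by omega⟩ ⟨k, hklt⟩ = c.2 :=
        congrArg (fun q => q.1.2) hf
      have h3 := congrArg (fun σ : Equiv.Perm (Fin (n+1)) => σ ⟨k-1, by omega⟩) hπ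
      simp only [Equiv.Perm.mul_apply, Equiv.swap_apply_left] at h3
      have h4 := c.2.injective h3
      have h5 := congrArg Fin.val h4
      simp only [Fin.val_mk] at h5
      omega


variable {n N : ℕ}

theorem goodCount (L : (Fin n → ℕ) → ℕ) (hL : ∀ x, (∀ j, x j ≤ N) → L x ≤ n)
    (c : (Fin n → Fin N) × Equiv.Perm (Fin n)) :
    ((Finset.range (n+1)).filter (fun k => IsGood L c k)).card % 2
      = if IsRainbow L c then 1 else 0 := by
  set g : ℕ → ℕ := fun k => L (Vtx c k) with hgdef
  have hg : ∀ k, g k ≤ n := fun k => hL _ (vtx_le c k)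
  by_cases hr : IsRainbow L c
  · -- image of range (n+1) is range (n+1), hence injective on it
    have himg : (Finset.range (n+1)).image g = Finset.range (n+1) := by
      apply Finset.Subset.antisymm
      · intro m hm
        obtain ⟨k, hk, hgk⟩ := Finset.mem_image.1 hm
        exact Finset.mem_range.2 (Nat.lt_succ_of_le (hgk ▸ hg k))
      · intro m hm
        obtain ⟨k, hk, hgk⟩ := hr m (Nat.lt_succ_iff.1 (Finset.mem_range.1 hm))
        exact Finset.mem_image.2 ⟨k, Finset.mem_range.2 (Nat.lt_succ_of_le hk), hgk⟩
    have hinj : Set.InjOn g (Finset.range (n+1)) := by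
      rw [← Finset.card_image_iff, himg]
    obtain ⟨k₁, hk₁, hgk₁⟩ := hr n le_rfl
    have hfil : (Finset.range (n+1)).filter (fun k => IsGood L c k) = {k₁} := by
      apply Finset.ext
      intro k
      simp only [Finset.mem_filter, Finset.mem_range, Finset.mem_singleton]
      constructor
      · rintro ⟨hk, hgood⟩
        by_contra hne
        have hgkn : g k ≠ n := by
          intro h
          exact hne (hinj (Finset.mem_coe.2 (Finset.mem_range.2 hk))
            (Finset.mem_coe.2 (Finset.mem_range.2 (Nat.lt_succ_of_le hk₁))) (h.trans hgk₁.symm))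
        have hlt : g k < n := lt_of_le_of_ne (hg k) hgkn
        obtain ⟨j, hj, hjk, hgj⟩ := hgood (g k) hlt
        exact hjk (hinj (Finset.mem_coe.2 (Finset.mem_range.2 (Nat.lt_succ_of_le hj)))
          (Finset.mem_coe.2 (Finset.mem_range.2 hk)) hgj)
      · intro hk
        subst hk
        refine ⟨Nat.lt_succ_of_le hk₁, ?_⟩
        intro m hm
        obtain ⟨j, hj, hgj⟩ := hr m (le_of_lt hm)
        refine ⟨j, hj, ?_, hgj⟩
        intro h
        subst h
        rw [hgj] at hgk₁
        omega
    rw [hfil, if_pos hr, Finset.card_singleton]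
  · rw [if_neg hr]
    by_cases hne : ((Finset.range (n+1)).filter (fun k => IsGood L c k)).Nonempty
    · obtain ⟨k₀, hk₀mem⟩ := hne
      obtain ⟨hk₀r, hk₀good⟩ := Finset.mem_filter.1 hk₀mem
      have hk₀ : k₀ ≤ n := Nat.lt_succ_iff.1 (Finset.mem_range.1 hk₀r)
      -- choose witnesses
      have hch : ∀ m, m < n → ∃ j, j ≤ n ∧ j ≠ k₀ ∧ g j = m := fun m hm => hk₀good m hm
      classical
      set Jm : ℕ → ℕ := fun m => if hm : m < n then (hch m hm).choose else 0 with hJm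
      have hJ : ∀ m, m < n → Jm m ≤ n ∧ Jm m ≠ k₀ ∧ g (Jm m) = m := by
        intro m hm
        simp only [hJm, dif_pos hm]
        exact (hch m hm).choose_spec
      have hJinj : Set.InjOn Jm (Finset.range n) := by
        intro a ha b hb hab
        have ha' := (hJ a (Finset.mem_range.1 ha)).2.2
        have hb' := (hJ b (Finset.mem_range.1 hb)).2.2
        rw [← ha', ← hb', hab]
      have hJcard : ((Finset.range n).image Jm).card = n := by
        rw [Finset.card_image_of_injOn hJinj, Finset.card_range]
      have hJsub : (Finset.range n).image Jm ⊆ (Finset.range (n+1)).erase k₀ := by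
        intro j hj
        obtain ⟨m, hm, hjm⟩ := Finset.mem_image.1 hj
        obtain ⟨h1, h2, _⟩ := hJ m (Finset.mem_range.1 hm)
        exact Finset.mem_erase.2 ⟨hjm ▸ h2, Finset.mem_range.2 (Nat.lt_succ_of_le (hjm ▸ h1))⟩
      have hJeq : (Finset.range n).image Jm = (Finset.range (n+1)).erase k₀ := by
        apply Finset.eq_of_subset_of_card_le hJsub
        rw [Finset.card_erase_of_mem hk₀r, Finset.card_range, hJcard]
        omega
      have hd : g k₀ < n := by
        rcases lt_or_eq_of_le (hg k₀) with h | h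
        · exact h
        · exfalso
          apply hr
          intro m hm
          rcases lt_or_eq_of_le hm with h' | h'
          · obtain ⟨h1, _, h3⟩ := hJ m h'
            exact ⟨Jm m, h1, h3⟩
          · subst h'
            exact ⟨k₀, hk₀, h⟩
      set jd := Jm (g k₀) with hjd
      obtain ⟨hjd1, hjd2, hjd3⟩ := hJ (g k₀) hd
      have hfil : (Finset.range (n+1)).filter (fun k => IsGood L c k) = {k₀, jd} := by
        apply Finset.ext
        intro k
        simp only [Finset.mem_filter, Finset.mem_range, Finset.mem_insert, Finset.mem_singleton]
        constructor
        · rintro ⟨hkr, hkgood⟩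
          by_contra hcon
          push_neg at hcon
          obtain ⟨hne1, hne2⟩ := hcon
          -- k ∈ erase k₀ = image Jm
          have hkJ : k ∈ (Finset.range n).image Jm := by
            rw [hJeq]
            exact Finset.mem_erase.2 ⟨hne1, Finset.mem_range.2 hkr⟩
          obtain ⟨m, hmr, hmk⟩ := Finset.mem_image.1 hkJ
          have hm := Finset.mem_range.1 hmr
          have hgk : g k = m := by rw [← hmk]; exact (hJ m hm).2.2
          have hmd : m ≠ g k₀ := by
            intro h
            apply hne2
            rw [← hmk, h]
          obtain ⟨j, hj1, hj2, hj3⟩ := hkgood m hm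
          -- j is in range (n+1) = {k₀} ∪ image Jm
          rcases eq_or_ne j k₀ with h | h
          · subst h
            exact hmd hj3.symm
          · have hjJ : j ∈ (Finset.range n).image Jm := by
              rw [hJeq]
              exact Finset.mem_erase.2 ⟨h, Finset.mem_range.2 (Nat.lt_succ_of_le hj1)⟩
            obtain ⟨m', hm'r, hm'j⟩ := Finset.mem_image.1 hjJ
            have : m' = m := by rw [← hj3, ← hm'j]; exact ((hJ m' (Finset.mem_range.1 hm'r)).2.2).symm
            subst this
            exact hj2 (by rw [← hm'j, hmk])
        · intro hk
          rcases hk with h | h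
          · subst h; exact ⟨Finset.mem_range.1 hk₀r, hk₀good⟩
          · subst h
            refine ⟨Nat.lt_succ_of_le hjd1, ?_⟩
            intro m hm
            rcases eq_or_ne m (g k₀) with h' | h'
            · exact ⟨k₀, hk₀, fun hc => hjd2 hc.symm, h'.symm⟩
            · obtain ⟨h1, _, h3⟩ := hJ m hm
              refine ⟨Jm m, h1, ?_, h3⟩
              intro hc
              apply h'
              rw [← h3, hc, hjd3]
        
      rw [hfil]
      have : k₀ ≠ jd := fun h => hjd2 h.symm
      rw [Finset.card_insert_of_notMem (by simpa using this), Finset.card_singleton]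
    · rw [Finset.not_nonempty_iff_eq_empty.1 hne, Finset.card_empty]


/-- Extend a permutation of `Fin n` to `Fin (n+1)` sending `0` to `last` and
`j+1` to `castSucc (σ j)`. -/
def permExtFun (σ : Equiv.Perm (Fin n)) : Fin (n+1) → Fin (n+1) :=
  Fin.cases (Fin.last n) (fun j => (σ j).castSucc)

theorem permExtFun_inj (σ : Equiv.Perm (Fin n)) : Function.Injective (permExtFun σ) := by
  intro a b hab
  induction a using Fin.cases with
  | zero =>
    induction b using Fin.cases with
    | zero => rfl
    | succ b' =>
      exfalso
      unfold permExtFun at hab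
      simp only [Fin.cases_zero, Fin.cases_succ] at hab
      exact Fin.ne_last_of_lt (Fin.castSucc_lt_last (σ b')) hab.symm
  | succ a' =>
    induction b using Fin.cases with
    | zero =>
      exfalso
      unfold permExtFun at hab
      simp only [Fin.cases_zero, Fin.cases_succ] at hab
      exact Fin.ne_last_of_lt (Fin.castSucc_lt_last (σ a')) hab
    | succ b' =>
      unfold permExtFun at hab
      simp only [Fin.cases_succ] at hab
      have := σ.injective (Fin.castSucc_injective n hab)
      rw [this]

noncomputable def permExt (σ : Equiv.Perm (Fin n)) : Equiv.Perm (Fin (n+1)) :=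
  Equiv.ofBijective (permExtFun σ) ((Finite.injective_iff_bijective).1 (permExtFun_inj σ))

theorem permExt_zero (σ : Equiv.Perm (Fin n)) : permExt σ 0 = Fin.last n := rfl

theorem permExt_succ (σ : Equiv.Perm (Fin n)) (j : Fin n) :
    permExt σ j.succ = (σ j).castSucc := by
  show permExtFun σ j.succ = _
  unfold permExtFun
  simp

theorem permExt_inv_last (σ : Equiv.Perm (Fin n)) : (permExt σ)⁻¹ (Fin.last n) = 0 := by
  rw [Equiv.Perm.inv_eq_iff_eq]
  exact (permExt_zero σ).symm

theorem permExt_inv_castSucc (σ : Equiv.Perm (Fin n)) (i : Fin n) :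
    (permExt σ)⁻¹ i.castSucc = (σ⁻¹ i).succ := by
  rw [Equiv.Perm.inv_eq_iff_eq, permExt_succ, ← Equiv.Perm.mul_apply, mul_inv_cancel, Equiv.Perm.one_apply]

theorem permExt_injective : Function.Injective (permExt (n := n)) := by
  intro σ τ h
  apply Equiv.ext
  intro j
  have h1 := congrArg (fun ρ : Equiv.Perm (Fin (n+1)) => ρ j.succ) h
  simp only [permExt_succ] at h1
  exact Fin.castSucc_injective n h1

/-- The extended cell in dimension `n+1` sitting in the wall `x_last = N`. -/
noncomputable def cellExt (hN : 0 < N) (b : (Fin n → Fin N) × Equiv.Perm (Fin n)) :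
    (Fin (n+1) → Fin N) × Equiv.Perm (Fin (n+1)) :=
  (Fin.snoc b.1 ⟨N-1, by omega⟩, permExt b.2)

theorem vtx_cellExt (hN : 0 < N) (b : (Fin n → Fin N) × Equiv.Perm (Fin n)) (k : ℕ)
    (hk : k ≤ n) :
    Vtx (cellExt hN b) (k+1) = Fin.snoc (Vtx b k) N := by
  funext i
  refine Fin.lastCases ?_ (fun i' => ?_) i
  · unfold Vtx cellExt
    simp only [Fin.snoc_last, permExt_inv_last]
    rw [if_pos (by simp)]
    show N - 1 + 1 = N
    omega
  · unfold Vtx cellExt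
    simp only [Fin.snoc_castSucc, permExt_inv_castSucc]
    have hval : ((b.2⁻¹ i').succ : ℕ) = (b.2⁻¹ i' : ℕ) + 1 := by simp
    rw [hval]
    congr 1
    exact if_congr (by omega) rfl rfl

theorem snoc_le (y : Fin n → ℕ) (hy : ∀ j, y j ≤ N) (j : Fin (n+1)) :
    (Fin.snoc y N : Fin (n+1) → ℕ) j ≤ N := by
  induction j using Fin.lastCases with
  | last => simp
  | cast j' =>
    simp only [Fin.snoc_castSucc]
    exact hy j'

theorem zmod_of_mod2 {a b : ℕ} (h : a % 2 = b % 2) : (a : ZMod 2) = (b : ZMod 2) := by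
  rw [← ZMod.natCast_mod a 2, ← ZMod.natCast_mod b 2, h]

theorem odd_of_zmod2 {a : ℕ} (h : (a : ZMod 2) = 1) : Odd a := by
  rw [Nat.odd_iff]
  rcases Nat.mod_two_eq_zero_or_one a with h' | h'
  · exfalso
    rw [← ZMod.natCast_mod a 2, h'] at h
    simp at h
  · exact h'

theorem zmod2_of_odd {a : ℕ} (h : Odd a) : (a : ZMod 2) = 1 := by
  rw [Nat.odd_iff] at h
  rw [← ZMod.natCast_mod a 2, h]
  simp

theorem piv_snd (p : ((Fin (n+1) → Fin N) × Equiv.Perm (Fin (n+1))) × ℕ) :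
    (piv p).2 = p.2 ∨ (piv p).2 = 0 ∨ (piv p).2 = n+1 := by
  unfold piv
  split_ifs <;> simp

theorem kuhn : ∀ (n N : ℕ), 0 < N → ∀ (L : (Fin n → ℕ) → ℕ),
    (∀ x, (∀ j, x j ≤ N) → L x ≤ n) →
    (∀ x (i : Fin n), (∀ j, x j ≤ N) → x i = 0 → L x ≠ (i : ℕ)) →
    (∀ x (i : Fin n), (∀ j, x j ≤ N) → x i = N → L x ≤ (i : ℕ)) →
    Odd ((Finset.univ.filter (fun c : (Fin n → Fin N) × Equiv.Perm (Fin n) =>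
      IsRainbow L c)).card) := by
  intro n
  induction n with
  | zero =>
    intro N hN L hL ha hb
    have hall : ∀ c : (Fin 0 → Fin N) × Equiv.Perm (Fin 0), IsRainbow L c := by
      intro c m hm
      have hm0 : m = 0 := Nat.le_zero.1 hm
      subst hm0
      exact ⟨0, le_rfl, Nat.le_zero.1 (hL _ (fun j => j.elim0))⟩
    rw [Finset.filter_true_of_mem (fun c _ => hall c), Finset.card_univ]
    have hcard : Fintype.card ((Fin 0 → Fin N) × Equiv.Perm (Fin 0)) = 1 := by
      rw [Fintype.card_prod]
      rw [Fintype.card_fun, Fintype.card_perm]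
      simp
    rw [hcard]
    exact odd_one
  | succ n IH =>
    intro N hN L hL ha hb
    classical
    set R : Finset ((Fin (n+1) → Fin N) × Equiv.Perm (Fin (n+1))) :=
      Finset.univ.filter (fun c => IsRainbow L c) with hR
    set P : Finset (((Fin (n+1) → Fin N) × Equiv.Perm (Fin (n+1))) × ℕ) :=
      (Finset.univ ×ˢ Finset.range (n+1+1)).filter (fun p => IsGood L p.1 p.2) with hP
    -- (i)  P.card ≡ R.card  (mod 2)
    have hPsum : P.card = ∑ c : (Fin (n+1) → Fin N) × Equiv.Perm (Fin (n+1)),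
        ((Finset.range (n+1+1)).filter (fun k => IsGood L c k)).card := by
      rw [hP, Finset.card_filter, Finset.sum_product]
      exact Finset.sum_congr rfl (fun c _ => (Finset.card_filter _ _).symm)
    have hi : (P.card : ZMod 2) = (R.card : ZMod 2) := by
      rw [hPsum, Nat.cast_sum, hR, Finset.card_filter, Nat.cast_sum]
      apply Finset.sum_congr rfl
      intro c _
      have h1 : ((Finset.range (n+1+1)).filter (fun k => IsGood L c k)).card % 2
          = (if IsRainbow L c then 1 else 0) % 2 := by
        rw [goodCount L hL c]
        split_ifs <;> rfl
      exact zmod_of_mod2 h1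
    -- (ii)  P.card ≡ Fix.card (mod 2)
    set Fx : Finset (((Fin (n+1) → Fin N) × Equiv.Perm (Fin (n+1))) × ℕ) :=
      P.filter (fun p => piv p = p) with hFx
    have hmaps : ∀ p ∈ P, piv p ∈ P := by
      intro p hp
      obtain ⟨hprod, hgood⟩ := Finset.mem_filter.1 hp
      obtain ⟨_, hk⟩ := Finset.mem_product.1 hprod
      have hk' : p.2 ≤ n+1 := Nat.lt_succ_iff.1 (Finset.mem_range.1 hk)
      refine Finset.mem_filter.2 ⟨Finset.mem_product.2 ⟨Finset.mem_univ _, ?_⟩, ?_⟩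
      · rcases piv_snd p with h | h | h <;> rw [h] <;> simp [Finset.mem_range] <;> omega
      · exact piv_good L p hk' hgood
    have hinvol : ∀ p ∈ P, piv (piv p) = p := by
      intro p hp
      obtain ⟨hprod, _⟩ := Finset.mem_filter.1 hp
      obtain ⟨_, hk⟩ := Finset.mem_product.1 hprod
      exact piv_invol p (Nat.lt_succ_iff.1 (Finset.mem_range.1 hk))
    have hii : (P.card : ZMod 2) = (Fx.card : ZMod 2) :=
      zmod_of_mod2 (card_modEq_fixed P piv hmaps hinvol)
    -- (iii) Fx.card = R'.card
    set L' : (Fin n → ℕ) → ℕ := fun y => L (Fin.snoc y N) with hL'def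
    set R' : Finset ((Fin n → Fin N) × Equiv.Perm (Fin n)) :=
      Finset.univ.filter (fun c => IsRainbow L' c) with hR'
    have hiii : R'.card = Fx.card := by
      apply Finset.card_bij (fun b _ => (cellExt hN b, 0))
      · -- maps into Fx
        intro b hb
        have hbr : IsRainbow L' b := (Finset.mem_filter.1 hb).2
        have hgood : IsGood L (cellExt hN b) 0 := by
          intro m hm
          obtain ⟨k, hk, hLk⟩ := hbr m (Nat.lt_succ_iff.1 hm)
          refine ⟨k+1, by omega, by omega, ?_⟩
          rw [vtx_cellExt hN b k hk]
          exact hLk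
        refine Finset.mem_filter.2 ⟨Finset.mem_filter.2
          ⟨Finset.mem_product.2 ⟨Finset.mem_univ _, Finset.mem_range.2 (by omega)⟩, hgood⟩, ?_⟩
        apply piv_zero_neg
        have e1 : (cellExt hN b).2 0 = Fin.last n := permExt_zero b.2
        rw [e1]
        have e2 : (cellExt hN b).1 (Fin.last n) = ⟨N-1, by omega⟩ := by
          show (Fin.snoc b.1 ⟨N-1, by omega⟩ : Fin (n+1) → Fin N) (Fin.last n) = _
          rw [Fin.snoc_last]
        rw [e2]
        show ¬(N - 1 + 1 < N)
        omega
      · -- injective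
        intro b hb b' hb' heq
        have h1 : cellExt hN b = cellExt hN b' := congrArg Prod.fst heq
        have hfst : b.1 = b'.1 := by
          funext j
          have := congrArg (fun z => z.1 j.castSucc) h1
          simpa [cellExt, Fin.snoc_castSucc] using this
        have hsnd : b.2 = b'.2 := permExt_injective (congrArg Prod.snd h1)
        exact Prod.ext hfst hsnd
      · -- surjective
        intro p hp
        obtain ⟨hpP, hpfix⟩ := Finset.mem_filter.1 hp
        obtain ⟨hprod, hgood⟩ := Finset.mem_filter.1 hpP
        obtain ⟨_, hkr⟩ := Finset.mem_product.1 hprod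
        have hk' : p.2 ≤ n+1 := Nat.lt_succ_iff.1 (Finset.mem_range.1 hkr)
        obtain ⟨hp0, hpN, hplast⟩ := piv_fixed_char L ha hb p hk' hgood hpfix
        -- construct the lower-dimensional cell
        have hne : ∀ j : Fin n, p.1.2 j.succ ≠ Fin.last n := by
          intro j hcon
          rw [← hplast] at hcon
          exact Fin.succ_ne_zero j (p.1.2.injective hcon)
        have hfinj : Function.Injective (fun j : Fin n => (p.1.2 j.succ).castPred (hne j)) := by
          intro a b hab
          have : p.1.2 a.succ = p.1.2 b.succ := by
            have := congrArg Fin.castSucc hab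
            rwa [Fin.castSucc_castPred, Fin.castSucc_castPred] at this
          exact Fin.succ_injective n (p.1.2.injective this)
        set σ : Equiv.Perm (Fin n) :=
          Equiv.ofBijective _ ((Finite.injective_iff_bijective).1 hfinj) with hσ
        have hσap : ∀ j : Fin n, σ j = (p.1.2 j.succ).castPred (hne j) := fun j => rfl
        set b : (Fin n → Fin N) × Equiv.Perm (Fin n) :=
          (fun j => p.1.1 j.castSucc, σ) with hb
        have hEb : cellExt hN b = p.1 := by
          have hfst : (cellExt hN b).1 = p.1.1 := by
            funext i
            induction i using Fin.lastCases with
            | last =>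
              show (Fin.snoc b.1 ⟨N-1, by omega⟩ : Fin (n+1) → Fin N) (Fin.last n) = _
              rw [Fin.snoc_last]
              apply Fin.ext
              show N - 1 = (p.1.1 (Fin.last n) : ℕ)
              rw [← hplast]
              omega
            | cast i' =>
              show (Fin.snoc b.1 ⟨N-1, by omega⟩ : Fin (n+1) → Fin N) i'.castSucc = _
              rw [Fin.snoc_castSucc]
          have hsnd : (cellExt hN b).2 = p.1.2 := by
            apply Equiv.ext
            intro i
            induction i using Fin.cases with
            | zero =>
              show permExt σ 0 = _
              rw [permExt_zero, hplast]
            | succ j =>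
              show permExt σ j.succ = _
              rw [permExt_succ, hσap j, Fin.castSucc_castPred]
          exact Prod.ext hfst hsnd
        have hbR' : b ∈ R' := by
          refine Finset.mem_filter.2 ⟨Finset.mem_univ _, ?_⟩
          intro m hm
          rw [hp0] at hgood
          obtain ⟨j, hj, hj0, hLj⟩ := hgood m (by omega)
          refine ⟨j - 1, by omega, ?_⟩
          show L (Fin.snoc (Vtx b (j-1)) N) = m
          rw [← vtx_cellExt hN b (j-1) (by omega), hEb]
          have hjj : j - 1 + 1 = j := by omega
          rw [hjj]
          exact hLj
        refine ⟨b, hbR', ?_⟩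
        rw [hEb]
        exact Prod.ext rfl hp0.symm
    -- conclude by induction hypothesis
    have hL' : ∀ y, (∀ j, y j ≤ N) → L' y ≤ n := by
      intro y hy
      have hval : (Fin.snoc y N : Fin (n+1) → ℕ) (Fin.last n) = N := by simp
      have := hb (Fin.snoc y N) (Fin.last n) (snoc_le y hy) hval
      simpa using this
    have ha' : ∀ y (i : Fin n), (∀ j, y j ≤ N) → y i = 0 → L' y ≠ (i : ℕ) := by
      intro y i hy hyi
      have hval : (Fin.snoc y N : Fin (n+1) → ℕ) i.castSucc = 0 := by
        rw [Fin.snoc_castSucc]; exact hyi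
      have := ha (Fin.snoc y N) i.castSucc (snoc_le y hy) hval
      simpa using this
    have hb' : ∀ y (i : Fin n), (∀ j, y j ≤ N) → y i = N → L' y ≤ (i : ℕ) := by
      intro y i hy hyi
      have hval : (Fin.snoc y N : Fin (n+1) → ℕ) i.castSucc = N := by
        rw [Fin.snoc_castSucc]; exact hyi
      have := hb (Fin.snoc y N) i.castSucc (snoc_le y hy) hval
      simpa using this
    have hIH := IH N hN L' hL' ha' hb'
    apply odd_of_zmod2
    rw [← hi, hii, ← hiii]
    exact zmod2_of_odd hIH

/-! ### Embedding the grid into the cube, and Poincaré–Miranda -/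

noncomputable def emb (N : ℕ) (x : Fin n → ℕ) : Fin n → ℝ :=
  fun i => 2 * ((x i : ℝ) / (N : ℝ)) - 1

theorem emb_mem_cube (hN : 0 < N) (x : Fin n → ℕ) (hx : ∀ j, x j ≤ N) :
    emb N x ∈ cube n := by
  intro i
  have hN' : (0 : ℝ) < N := by exact_mod_cast hN
  have h0 : (0 : ℝ) ≤ (x i : ℝ) / N := by positivity
  have h1 : (x i : ℝ) / N ≤ 1 := by
    rw [div_le_one hN']
    exact_mod_cast hx i
  rw [abs_le]
  unfold emb
  constructor <;> nlinarith

theorem emb_zero (N : ℕ) (x : Fin n → ℕ) (i : Fin n) (h : x i = 0) : emb N x i = -1 := by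
  unfold emb
  rw [h]
  simp

theorem emb_top (hN : 0 < N) (x : Fin n → ℕ) (i : Fin n) (h : x i = N) : emb N x i = 1 := by
  unfold emb
  rw [h]
  have hN' : (N : ℝ) ≠ 0 := by positivity
  rw [div_self hN']
  norm_num

theorem emb_dist (hN : 0 < N) (u v : Fin n → ℕ) (h : ∀ i, v i ≤ u i ∧ u i ≤ v i + 1) :
    dist (emb N u) (emb N v) ≤ 2 / N := by
  have hN' : (0 : ℝ) < N := by exact_mod_cast hN
  rw [dist_pi_le_iff (by positivity)]
  intro i
  rw [Real.dist_eq]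
  have hc : (2 : ℝ) * ((u i : ℝ) / N) - 1 - (2 * ((v i : ℝ) / N) - 1)
      = 2 * (((u i : ℝ) - (v i : ℝ)) / N) := by ring
  unfold emb
  rw [hc, abs_mul, abs_div]
  have h1 : |(u i : ℝ) - (v i : ℝ)| ≤ 1 := by
    rw [abs_le]
    have h2 := (h i).1
    have h3 := (h i).2
    have h2' : (v i : ℝ) ≤ (u i : ℝ) := by exact_mod_cast h2
    have h3' : (u i : ℝ) ≤ (v i : ℝ) + 1 := by exact_mod_cast h3
    constructor <;> linarith
  have h4 : |(2 : ℝ)| = 2 := by norm_num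
  have h5 : |(N : ℝ)| = N := abs_of_pos hN'
  rw [h4, h5]
  have h6 : |(u i : ℝ) - (v i : ℝ)| / (N : ℝ) ≤ 1 / N := by gcongr
  rw [show (2:ℝ)/(N:ℝ) = 2*(1/(N:ℝ)) by ring]
  linarith

theorem cube_compact (n : ℕ) : IsCompact (cube n) := by
  have hc : cube n = Set.pi Set.univ (fun _ : Fin n => Set.Icc (-1 : ℝ) 1) := by
    ext x
    simp only [cube, Set.mem_setOf_eq, Set.mem_pi, Set.mem_univ, Set.mem_Icc, forall_true_left,
      true_implies]
    exact forall_congr' (fun i => abs_le)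
  rw [hc]
  exact isCompact_univ_pi (fun _ => isCompact_Icc)

theorem poincare_miranda (n : ℕ) (f : (Fin n → ℝ) → (Fin n → ℝ)) (hf : Continuous f)
    (hminus : ∀ x ∈ cube n, ∀ i, x i = -1 → f x i ≤ 0)
    (hplus : ∀ x ∈ cube n, ∀ i, x i = 1 → 0 ≤ f x i) :
    ∃ x ∈ cube n, f x = 0 := by
  classical
  -- the labelling associated with grid size N+1
  set L : ℕ → ((Fin n → ℕ) → ℕ) := fun N x =>
    if h : (Finset.univ.filter
        (fun i : Fin n => 0 < f (emb (N+1) x) i ∨ x i = N+1)).Nonempty then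
      (((Finset.univ.filter
        (fun i : Fin n => 0 < f (emb (N+1) x) i ∨ x i = N+1)).min' h : Fin n) : ℕ)
    else n with hLdef
  have hL : ∀ N x, (∀ j, x j ≤ N+1) → L N x ≤ n := by
    intro N x _
    simp only [hLdef]
    split_ifs with h
    · exact le_of_lt (Finset.min' _ h).isLt
    · exact le_rfl
  have ha : ∀ N x (i : Fin n), (∀ j, x j ≤ N+1) → x i = 0 → L N x ≠ (i : ℕ) := by
    intro N x i hx hxi hcon
    simp only [hLdef] at hcon
    split_ifs at hcon with h
    · have hmin : (Finset.univ.filter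
          (fun i : Fin n => 0 < f (emb (N+1) x) i ∨ x i = N+1)).min' h = i :=
        Fin.ext hcon
      have hmem := Finset.min'_mem _ h
      rw [hmin] at hmem
      rcases (Finset.mem_filter.1 hmem).2 with hpos | htop
      · have : emb (N+1) x i = -1 := emb_zero _ x i hxi
        have := hminus (emb (N+1) x) (emb_mem_cube (by omega) x hx) i this
        linarith
      · omega
    · exact absurd hcon.symm (Nat.ne_of_lt i.isLt)
  have hb : ∀ N x (i : Fin n), (∀ j, x j ≤ N+1) → x i = N+1 → L N x ≤ (i : ℕ) := by
    intro N x i hx hxi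
    have hmem : i ∈ Finset.univ.filter
        (fun i : Fin n => 0 < f (emb (N+1) x) i ∨ x i = N+1) :=
      Finset.mem_filter.2 ⟨Finset.mem_univ _, Or.inr hxi⟩
    simp only [hLdef]
    rw [dif_pos ⟨i, hmem⟩]
    exact_mod_cast Finset.min'_le _ i hmem
  -- rainbow cells at every scale
  have hrb : ∀ N : ℕ, ∃ c : (Fin n → Fin (N+1)) × Equiv.Perm (Fin n), IsRainbow (L N) c := by
    intro N
    have hodd := kuhn n (N+1) (by omega) (L N) (hL N) (ha N) (hb N)
    have hpos := hodd.pos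
    obtain ⟨c, hc⟩ := Finset.card_pos.1 hpos
    exact ⟨c, (Finset.mem_filter.1 hc).2⟩
  choose c hc using hrb
  -- extract the useful vertices
  have keyu : ∀ N : ℕ, ∃ u ∈ cube n,
      dist u (emb (N+1) (Vtx (c N) 0)) ≤ 2/(N+1) ∧ ∀ i, f u i ≤ 0 := by
    intro N
    obtain ⟨k, hk, hLk⟩ := hc N n le_rfl
    refine ⟨emb (N+1) (Vtx (c N) k), emb_mem_cube (by omega) _ (vtx_le _ _), ?_, ?_⟩
    · have hd : ∀ i, Vtx (c N) 0 i ≤ Vtx (c N) k i ∧ Vtx (c N) k i ≤ Vtx (c N) 0 i + 1 := by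
        intro i
        unfold Vtx
        constructor
        · split <;> split <;> omega
        · split <;> split <;> omega
      have := emb_dist (N := N+1) (by omega) (Vtx (c N) k) (Vtx (c N) 0) hd
      calc dist (emb (N+1) (Vtx (c N) k)) (emb (N+1) (Vtx (c N) 0)) ≤ 2/(N+1 : ℕ) := this
        _ ≤ 2/(N+1) := by push_cast; norm_num
    · intro i
      simp only [hLdef] at hLk
      split_ifs at hLk with h
      · exfalso
        have := ((Finset.univ.filter
          (fun i : Fin n => 0 < f (emb (N+1) (Vtx (c N) k)) i ∨ Vtx (c N) k i = N+1)).min' h).isLt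
        omega
      · push_neg at h
        have h2 := h
        by_contra hcon
        push_neg at hcon
        have : i ∈ Finset.univ.filter
            (fun i : Fin n => 0 < f (emb (N+1) (Vtx (c N) k)) i ∨ Vtx (c N) k i = N+1) :=
          Finset.mem_filter.2 ⟨Finset.mem_univ _, Or.inl hcon⟩
        rw [h2] at this
        exact absurd this (Finset.notMem_empty i)
  have keyw : ∀ N : ℕ, ∀ i : Fin n, ∃ w ∈ cube n,
      dist w (emb (N+1) (Vtx (c N) 0)) ≤ 2/(N+1) ∧ 0 ≤ f w i := by
    intro N i
    obtain ⟨k, hk, hLk⟩ := hc N (i : ℕ) (le_of_lt i.isLt)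
    refine ⟨emb (N+1) (Vtx (c N) k), emb_mem_cube (by omega) _ (vtx_le _ _), ?_, ?_⟩
    · have hd : ∀ j, Vtx (c N) 0 j ≤ Vtx (c N) k j ∧ Vtx (c N) k j ≤ Vtx (c N) 0 j + 1 := by
        intro j
        unfold Vtx
        constructor
        · split <;> split <;> omega
        · split <;> split <;> omega
      have := emb_dist (N := N+1) (by omega) (Vtx (c N) k) (Vtx (c N) 0) hd
      calc dist (emb (N+1) (Vtx (c N) k)) (emb (N+1) (Vtx (c N) 0)) ≤ 2/(N+1 : ℕ) := this
        _ ≤ 2/(N+1) := by push_cast; norm_num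
    · rw [hLdef] at hLk
      simp only at hLk
      split_ifs at hLk with h
      · have hmin : (Finset.univ.filter
            (fun j : Fin n => 0 < f (emb (N+1) (Vtx (c N) k)) j ∨ Vtx (c N) k j = N+1)).min' h
            = i := Fin.ext hLk
        have hmem := Finset.min'_mem _ h
        rw [hmin] at hmem
        rcases (Finset.mem_filter.1 hmem).2 with hpos | htop
        · exact le_of_lt hpos
        · have : emb (N+1) (Vtx (c N) k) i = 1 := emb_top (by omega) _ i htop
          exact hplus _ (emb_mem_cube (by omega) _ (vtx_le _ _)) i this
      · exfalso
        have := i.isLt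
        omega
  choose u hu hud huf using keyu
  choose w hw hwd hwf using keyw
  -- compactness
  set b : ℕ → (Fin n → ℝ) := fun N => emb (N+1) (Vtx (c N) 0) with hbdef
  have hbmem : ∀ N, b N ∈ cube n := fun N => emb_mem_cube (by omega) _ (vtx_le _ _)
  obtain ⟨xs, hxs, φ, hφ, hbconv⟩ := (cube_compact n).tendsto_subseq hbmem
  have hrate : Filter.Tendsto (fun k : ℕ => (2 : ℝ)/(φ k + 1)) Filter.atTop (nhds 0) := by
    apply squeeze_zero (fun k => by positivity) (g := fun k : ℕ => (2:ℝ)/(k+1))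
    · intro k
      have h0 : k ≤ φ k := hφ.le_apply
      have h1 : (k : ℝ) + 1 ≤ (φ k : ℝ) + 1 := by exact_mod_cast Nat.succ_le_succ h0
      apply div_le_div_of_nonneg_left (by norm_num) (by positivity) h1
    · have := tendsto_one_div_add_atTop_nhds_zero_nat (𝕜 := ℝ)
      have h2 : (fun k : ℕ => (2:ℝ)/(k+1)) = (fun k : ℕ => (2:ℝ) * (1/(k+1))) := by
        funext k; ring
      rw [h2]
      have := this.const_mul (2 : ℝ)
      simpa using this
  have hconv : ∀ (v : ℕ → (Fin n → ℝ)), (∀ N, dist (v N) (b N) ≤ 2/(N+1)) →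
      Filter.Tendsto (fun k => v (φ k)) Filter.atTop (nhds xs) := by
    intro v hv
    rw [tendsto_iff_dist_tendsto_zero]
    apply squeeze_zero (fun k => dist_nonneg)
      (g := fun k => 2/(φ k + 1) + dist (b (φ k)) xs)
    · intro k
      calc dist (v (φ k)) xs ≤ dist (v (φ k)) (b (φ k)) + dist (b (φ k)) xs :=
            dist_triangle _ _ _
        _ ≤ 2/(φ k + 1) + dist (b (φ k)) xs := by
            have := hv (φ k)
            push_cast at this ⊢
            linarith
    · have h2 : Filter.Tendsto (fun k => dist (b (φ k)) xs) Filter.atTop (nhds 0) := by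
        rw [← tendsto_iff_dist_tendsto_zero]
        exact hbconv
      simpa using hrate.add h2
  refine ⟨xs, hxs, ?_⟩
  funext i
  have hcont : Continuous (fun y => f y i) := (continuous_apply i).comp hf
  have hle : f xs i ≤ 0 := by
    have hconvu := hconv u hud
    have htend : Filter.Tendsto (fun k => f (u (φ k)) i) Filter.atTop (nhds (f xs i)) :=
      (hcont.continuousAt.tendsto).comp hconvu
    exact le_of_tendsto htend (Filter.Eventually.of_forall (fun k => huf (φ k) i))
  have hge : 0 ≤ f xs i := by
    have hconvw := hconv (fun N => w N i) (fun N => hwd N i)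
    have htend : Filter.Tendsto (fun k => f (w (φ k) i) i) Filter.atTop (nhds (f xs i)) :=
      (hcont.continuousAt.tendsto).comp hconvw
    exact ge_of_tendsto htend (Filter.Eventually.of_forall (fun k => hwf (φ k) i))
  show f xs i = (0 : Fin n → ℝ) i
  simp only [Pi.zero_apply]
  linarith

/-! ### Restriction of convex combinations to a face of the cube -/

theorem hull_restrict (σ : Finset (Fin n → ℝ)) (i : Fin n) (s : ℝ) (hs : s * s = 1)
    (x : Fin n → ℝ) (hx : x ∈ convexHull ℝ (σ : Set (Fin n → ℝ)))
    (hbd : ∀ v ∈ σ, s * v i ≤ 1) (hxi : x i = s) :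
    x ∈ convexHull ℝ ((σ.filter (fun v => v i = s)) : Set (Fin n → ℝ)) := by
  classical
  obtain ⟨w, hw0, hw1, hwx⟩ := Finset.mem_convexHull'.1 hx
  have hxi' : ∑ v ∈ σ, w v * v i = s := by
    have h1 := congrFun hwx i
    rw [Finset.sum_apply] at h1
    simp only [Pi.smul_apply, smul_eq_mul] at h1
    rw [h1, hxi]
  have hsum : ∑ v ∈ σ, w v * (1 - s * v i) = 0 := by
    have h2 : ∑ v ∈ σ, w v * (1 - s * v i) = (∑ v ∈ σ, w v) - s * ∑ v ∈ σ, w v * v i := by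
      rw [Finset.mul_sum, ← Finset.sum_sub_distrib]
      apply Finset.sum_congr rfl
      intro v _
      ring
    rw [h2, hw1, hxi', hs]
    ring
  have hnn : ∀ v ∈ σ, 0 ≤ w v * (1 - s * v i) := by
    intro v hv
    exact mul_nonneg (hw0 v hv) (by linarith [hbd v hv])
  have hzero : ∀ v ∈ σ, w v * (1 - s * v i) = 0 :=
    fun v hv => (Finset.sum_eq_zero_iff_of_nonneg hnn).1 hsum v hv
  have hwzero : ∀ v ∈ σ, v i ≠ s → w v = 0 := by
    intro v hv hne
    rcases mul_eq_zero.1 (hzero v hv) with h | h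
    · exact h
    · exfalso
      apply hne
      have h3 : s * v i = 1 := by linarith
      have h4 : s * (s * v i) = s * 1 := by rw [h3]
      calc v i = 1 * v i := by ring
        _ = s * s * v i := by rw [hs]
        _ = s * (s * v i) := by ring
        _ = s * 1 := h4
        _ = s := by ring
  refine Finset.mem_convexHull'.2 ⟨w, ?_, ?_, ?_⟩
  · intro y hy
    exact hw0 y (Finset.filter_subset _ _ hy)
  · rw [← hw1]
    apply Finset.sum_subset (Finset.filter_subset _ _)
    intro v hv hnv
    apply hwzero v hv
    intro hcon
    exact hnv (Finset.mem_filter.2 ⟨hv, hcon⟩)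
  · rw [← hwx]
    apply Finset.sum_subset (Finset.filter_subset _ _)
    intro v hv hnv
    have : w v = 0 := hwzero v hv (fun hcon => hnv (Finset.mem_filter.2 ⟨hv, hcon⟩))
    rw [this, zero_smul]

end CubicalSperner

open CubicalSperner

/-- **Cubical Sperner with Cubical Labels.** Let `K` be a finite
triangulation of `□ⁿ` and let `lab` assign to each vertex of `K` an extreme point of
`□ⁿ` such that whenever a vertex `x` has `xᵢ ∈ {−1, 1}`, the label of `x` agrees with
`x` at coordinate `i`.  Then `K` contains a neutral simplex: a simplex `σ` such that
for every coordinate `i` some vertex of `σ` has label with `i`-th coordinate `−1` and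
some vertex has label with `i`-th coordinate `+1`. -/
theorem cubical_sperner_cubical_labels
    (n : ℕ) (hn : 1 ≤ n) (K : Geometry.SimplicialComplex ℝ (Fin n → ℝ))
    (hfin : K.faces.Finite)
    (hspace : K.space = cube n)
    (lab : (Fin n → ℝ) → (Fin n → ℝ))
    (hlab : ∀ x ∈ K.vertices, lab x ∈ extCube n)
    (hproper : ∀ x ∈ K.vertices, ∀ i : Fin n, (x i = -1 ∨ x i = 1) → lab x i = x i) :
    ∃ σ ∈ K.faces, ∀ i : Fin n,
      (∃ v₁ ∈ σ, lab v₁ i = -1) ∧ (∃ v₂ ∈ σ, lab v₂ i = 1) := by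
  classical
  by_contra hcon
  push_neg at hcon
  -- basic facts about vertices of faces
  have hvx : ∀ σ ∈ K.faces, ∀ v ∈ σ, v ∈ K.vertices := by
    intro σ hσ v hv
    exact Geometry.SimplicialComplex.mem_vertices.2
      (K.down_closed hσ (Finset.singleton_subset_iff.2 hv) (Finset.singleton_nonempty v))
  have hvcube : ∀ σ ∈ K.faces, ∀ v ∈ σ, v ∈ cube n := by
    intro σ hσ v hv
    have h1 := K.subset_space hσ (Finset.mem_coe.2 hv)
    rwa [hspace] at h1
  -- every face has a constant label sign in some coordinate
  have hsign : ∀ σ ∈ K.faces, ∃ (i : Fin n) (s : ℝ), (s = 1 ∨ s = -1) ∧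
      ∀ v ∈ σ, lab v i = s := by
    intro σ hσ
    obtain ⟨i, hi⟩ := hcon σ hσ
    by_cases hA : ∃ v₁ ∈ σ, lab v₁ i = -1
    · -- then the second conjunct must fail
      have hB := hi hA
      refine ⟨i, -1, Or.inr rfl, ?_⟩
      intro v hv
      rcases hlab v (hvx σ hσ v hv) i with h | h
      · exact absurd h (hB v hv)
      · exact h
    · push_neg at hA
      refine ⟨i, 1, Or.inl rfl, ?_⟩
      intro v hv
      rcases hlab v (hvx σ hσ v hv) i with h | h
      · exact h
      · exact absurd h (hA v hv)
  -- the closed pieces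
  set Ap : Fin n → Set (Fin n → ℝ) := fun i =>
    ⋃ (σ : Finset (Fin n → ℝ)) (_ : σ ∈ K.faces ∧ ∀ v ∈ σ, lab v i = 1),
      convexHull ℝ (σ : Set (Fin n → ℝ)) with hApdef
  set An : Fin n → Set (Fin n → ℝ) := fun i =>
    ⋃ (σ : Finset (Fin n → ℝ)) (_ : σ ∈ K.faces ∧ ∀ v ∈ σ, lab v i = -1),
      convexHull ℝ (σ : Set (Fin n → ℝ)) with hAndef
  have hApmem : ∀ i x, x ∈ Ap i ↔ ∃ σ, (σ ∈ K.faces ∧ ∀ v ∈ σ, lab v i = 1) ∧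
      x ∈ convexHull ℝ (σ : Set (Fin n → ℝ)) := by
    intro i x
    rw [hApdef]
    simp only [Set.mem_iUnion, exists_prop]
  have hAnmem : ∀ i x, x ∈ An i ↔ ∃ σ, (σ ∈ K.faces ∧ ∀ v ∈ σ, lab v i = -1) ∧
      x ∈ convexHull ℝ (σ : Set (Fin n → ℝ)) := by
    intro i x
    rw [hAndef]
    simp only [Set.mem_iUnion, exists_prop]
  -- closedness
  have hApclosed : ∀ i, IsClosed (Ap i) := by
    intro i
    apply Set.Finite.isClosed_biUnion (hfin.subset (fun σ h => h.1))
    intro σ _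
    exact ((σ.finite_toSet).isCompact_convexHull ℝ).isClosed
  have hAnclosed : ∀ i, IsClosed (An i) := by
    intro i
    apply Set.Finite.isClosed_biUnion (hfin.subset (fun σ h => h.1))
    intro σ _
    exact ((σ.finite_toSet).isCompact_convexHull ℝ).isClosed
  -- wall conditions
  have hwallp : ∀ x ∈ cube n, ∀ i, x i = 1 → x ∈ Ap i := by
    intro x hx i hxi
    have hxsp : x ∈ K.space := by rw [hspace]; exact hx
    obtain ⟨σ, hσ, hxσ⟩ := Geometry.SimplicialComplex.mem_space_iff.1 hxsp
    have hbd : ∀ v ∈ σ, (1:ℝ) * v i ≤ 1 := by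
      intro v hv
      rw [one_mul]
      exact (abs_le.1 (hvcube σ hσ v hv i)).2
    have hres := hull_restrict σ i 1 (by norm_num) x hxσ hbd hxi
    set τ := σ.filter (fun v => v i = 1) with hτ
    have hτne : τ ≠ ∅ := by
      intro hemp
      rw [hemp] at hres
      simp at hres
    have hτf : τ ∈ K.faces := K.down_closed hσ (Finset.filter_subset _ _) (Finset.nonempty_iff_ne_empty.2 hτne)
    refine (hApmem i x).2 ⟨τ, ⟨hτf, ?_⟩, hres⟩
    intro v hv
    have hv1 : v i = 1 := (Finset.mem_filter.1 hv).2
    rw [hproper v (hvx τ hτf v hv) i (Or.inr hv1), hv1]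
  have hwalln : ∀ x ∈ cube n, ∀ i, x i = -1 → x ∈ An i := by
    intro x hx i hxi
    have hxsp : x ∈ K.space := by rw [hspace]; exact hx
    obtain ⟨σ, hσ, hxσ⟩ := Geometry.SimplicialComplex.mem_space_iff.1 hxsp
    have hbd : ∀ v ∈ σ, (-1:ℝ) * v i ≤ 1 := by
      intro v hv
      have := (abs_le.1 (hvcube σ hσ v hv i)).1
      linarith
    have hres := hull_restrict σ i (-1) (by norm_num) x hxσ hbd hxi
    set τ := σ.filter (fun v => v i = -1) with hτ
    have hτne : τ ≠ ∅ := by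
      intro hemp
      rw [hemp] at hres
      simp at hres
    have hτf : τ ∈ K.faces := K.down_closed hσ (Finset.filter_subset _ _) (Finset.nonempty_iff_ne_empty.2 hτne)
    refine (hAnmem i x).2 ⟨τ, ⟨hτf, ?_⟩, hres⟩
    intro v hv
    have hv1 : v i = -1 := (Finset.mem_filter.1 hv).2
    rw [hproper v (hvx τ hτf v hv) i (Or.inl hv1), hv1]
  -- disjointness
  have hdisj : ∀ i, ∀ x, x ∈ Ap i → x ∈ An i → False := by
    intro i x hxp hxn
    obtain ⟨σ₁, ⟨hσ₁, hl₁⟩, hx₁⟩ := (hApmem i x).1 hxp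
    obtain ⟨σ₂, ⟨hσ₂, hl₂⟩, hx₂⟩ := (hAnmem i x).1 hxn
    have hx3 := K.inter_subset_convexHull hσ₁ hσ₂ ⟨hx₁, hx₂⟩
    have hne : ((σ₁ : Set (Fin n → ℝ)) ∩ (σ₂ : Set (Fin n → ℝ))).Nonempty := by
      by_contra hemp
      rw [Set.not_nonempty_iff_eq_empty] at hemp
      rw [hemp, convexHull_empty] at hx3
      exact hx3
    obtain ⟨v, hv₁, hv₂⟩ := hne
    have h1 := hl₁ v (Finset.mem_coe.1 hv₁)
    have h2 := hl₂ v (Finset.mem_coe.1 hv₂)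
    rw [h1] at h2
    norm_num at h2
  -- nonemptiness
  have hApne : ∀ i, (Ap i).Nonempty := by
    intro i
    refine ⟨Function.update (fun _ => (0:ℝ)) i 1, hwallp _ ?_ i (Function.update_self _ _ _)⟩
    intro j
    by_cases hj : j = i
    · subst hj
      rw [Function.update_self]
      norm_num
    · rw [Function.update_of_ne hj]
      norm_num
  have hAnne : ∀ i, (An i).Nonempty := by
    intro i
    refine ⟨Function.update (fun _ => (0:ℝ)) i (-1), hwalln _ ?_ i (Function.update_self _ _ _)⟩
    intro j
    by_cases hj : j = i
    · subst hj
      rw [Function.update_self]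
      norm_num
    · rw [Function.update_of_ne hj]
      norm_num
  -- the Poincaré–Miranda function
  set F : (Fin n → ℝ) → (Fin n → ℝ) :=
    fun x i => Metric.infDist x (An i) - Metric.infDist x (Ap i) with hFdef
  have hFcont : Continuous F := by
    apply continuous_pi
    intro i
    exact (Metric.continuous_infDist_pt (An i)).sub (Metric.continuous_infDist_pt (Ap i))
  have hminus : ∀ x ∈ cube n, ∀ i, x i = -1 → F x i ≤ 0 := by
    intro x hx i hxi
    have h1 : Metric.infDist x (An i) = 0 := Metric.infDist_zero_of_mem (hwalln x hx i hxi)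
    have h2 : 0 ≤ Metric.infDist x (Ap i) := Metric.infDist_nonneg
    simp only [hFdef]
    linarith
  have hplus : ∀ x ∈ cube n, ∀ i, x i = 1 → 0 ≤ F x i := by
    intro x hx i hxi
    have h1 : Metric.infDist x (Ap i) = 0 := Metric.infDist_zero_of_mem (hwallp x hx i hxi)
    have h2 : 0 ≤ Metric.infDist x (An i) := Metric.infDist_nonneg
    simp only [hFdef]
    linarith
  obtain ⟨xs, hxs, hFxs⟩ := poincare_miranda n F hFcont hminus hplus
  -- xs is in some piece, hence in both, contradiction
  have hxsp : xs ∈ K.space := by rw [hspace]; exact hxs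
  obtain ⟨σ, hσ, hxσ⟩ := Geometry.SimplicialComplex.mem_space_iff.1 hxsp
  obtain ⟨i, s, hs, hall⟩ := hsign σ hσ
  have hFi : Metric.infDist xs (An i) = Metric.infDist xs (Ap i) := by
    have := congrFun hFxs i
    simp only [hFdef, Pi.zero_apply] at this
    linarith
  rcases hs with rfl | rfl
  · have hxp : xs ∈ Ap i := (hApmem i xs).2 ⟨σ, ⟨hσ, hall⟩, hxσ⟩
    have h1 : Metric.infDist xs (Ap i) = 0 := Metric.infDist_zero_of_mem hxp
    have h2 : Metric.infDist xs (An i) = 0 := by rw [hFi, h1]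
    have hxn : xs ∈ An i := ((hAnclosed i).mem_iff_infDist_zero (hAnne i)).2 h2
    exact hdisj i xs hxp hxn
  · have hxn : xs ∈ An i := (hAnmem i xs).2 ⟨σ, ⟨hσ, hall⟩, hxσ⟩
    have h1 : Metric.infDist xs (An i) = 0 := Metric.infDist_zero_of_mem hxn
    have h2 : Metric.infDist xs (Ap i) = 0 := by rw [← hFi, h1]
    have hxp : xs ∈ Ap i := ((hApclosed i).mem_iff_infDist_zero (hApne i)).2 h2
    exact hdisj i xs hxp hxn
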